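/- In the universal Coxeter group of rank 3, i.e., the Coxeter group with three generators s, t, u and all pairwise products of infinite order, the set {(st)ᵏu : k ∈ ℕ} is an infinite antichain in the right weak order. -/

import Mathlib

/-- The right weak order on a Coxeter group: `v ≤_R w` iff `ℓ(v) + ℓ(v⁻¹w) = ℓ(w)`. -/
def weakLE {B : Type*} {W : Type*} [Group W] {M : CoxeterMatrix B}
    (cs : CoxeterSystem M W) (v w : W) : Prop :=
  cs.length v + cs.length (v⁻¹ * w) = cs.length w

/-- The Coxeter matrix of the universal Coxeter group of rank 3:
all off-diagonal entries are `∞` (encoded as `0`). -/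
def univMatrix3 : CoxeterMatrix (Fin 3) where
  M := Matrix.of fun i j => if i = j then 1 else 0
  off_diagonal := by intro i i' h; simp [h]

namespace UnivAux

/-- Reduced words: lists with no two equal adjacent letters. -/
abbrev L := { l : List (Fin 3) // l.Chain' (· ≠ ·) }

def tf (i : Fin 3) : List (Fin 3) → List (Fin 3)
  | [] => [i]
  | j :: t => if j = i then t else i :: j :: t

lemma tf_chain (i : Fin 3) (l : List (Fin 3)) (h : l.Chain' (· ≠ ·)) :
    (tf i l).Chain' (· ≠ ·) := by
  cases l with
  | nil => simp [tf, List.Chain']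
  | cons j t =>
    by_cases hji : j = i
    · simpa [tf, hji, List.Chain'] using (List.isChain_cons.mp h).2
    · rw [tf, if_neg hji, List.Chain', List.isChain_cons_cons]
      exact ⟨Ne.symm hji, h⟩

lemma tf_tf (i : Fin 3) (l : List (Fin 3)) (h : l.Chain' (· ≠ ·)) :
    tf i (tf i l) = l := by
  cases l with
  | nil => simp [tf]
  | cons j t =>
    by_cases hji : j = i
    · subst hji
      rw [tf, if_pos rfl]
      cases t with
      | nil => simp [tf]
      | cons a u =>
        have : j ≠ a := List.isChain_cons_cons.mp h |>.1
        rw [tf, if_neg (Ne.symm this)]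
    · rw [tf, if_neg hji, tf, if_pos rfl]

def tperm (i : Fin 3) : Equiv.Perm L where
  toFun l := ⟨tf i l.1, tf_chain i l.1 l.2⟩
  invFun l := ⟨tf i l.1, tf_chain i l.1 l.2⟩
  left_inv l := by apply Subtype.ext; exact tf_tf i l.1 l.2
  right_inv l := by apply Subtype.ext; exact tf_tf i l.1 l.2

lemma tf_length (i : Fin 3) (l : List (Fin 3)) :
    (tf i l).length ≤ l.length + 1 := by
  cases l with
  | nil => simp [tf]
  | cons j t =>
    by_cases hji : j = i
    · simp [tf, hji]; omega
    · simp [tf, hji]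

lemma tperm_liftable : CoxeterMatrix.IsLiftable univMatrix3 tperm := by
  intro i j
  by_cases h : i = j
  · subst h
    rw [univMatrix3.diagonal i, pow_one]
    ext l : 2
    exact tf_tf i l.1 l.2
  · have : univMatrix3 i j = 0 := by
      simp [univMatrix3, Matrix.of_apply, h]
    rw [this, pow_zero]

variable {W : Type*} [Group W] (cs : CoxeterSystem univMatrix3 W)

noncomputable def φ : W →* Equiv.Perm L := cs.lift ⟨tperm, tperm_liftable⟩

lemma φ_simple (i : Fin 3) : φ cs (cs.simple i) = tperm i :=
  cs.lift_apply_simple tperm_liftable i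

def emp : L := ⟨[], List.isChain_nil⟩

lemma φ_len_le (σ : List (Fin 3)) :
    ((φ cs (cs.wordProd σ)) emp).1.length ≤ σ.length := by
  induction σ with
  | nil => simp [emp]
  | cons i σ ih =>
    rw [cs.wordProd_cons, map_mul, φ_simple]
    calc ((tperm i) ((φ cs (cs.wordProd σ)) emp)).1.length
        ≤ ((φ cs (cs.wordProd σ)) emp).1.length + 1 := tf_length _ _
      _ ≤ σ.length + 1 := by omega
      _ = (i :: σ).length := rfl

lemma φ_reduced (ω : List (Fin 3)) (h : ω.Chain' (· ≠ ·)) :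
    ((φ cs (cs.wordProd ω)) emp).1 = ω := by
  induction ω with
  | nil => simp [emp]
  | cons i ω ih =>
    have h' := (List.isChain_cons.mp h).2
    rw [cs.wordProd_cons, map_mul, φ_simple]
    have hv : ((φ cs (cs.wordProd ω)) emp).1 = ω := ih h'
    show tf i ((φ cs (cs.wordProd ω)) emp).1 = i :: ω
    rw [hv]
    cases ω with
    | nil => rfl
    | cons j t =>
      have : i ≠ j := (List.isChain_cons_cons.mp h).1
      rw [tf, if_neg (Ne.symm this)]

lemma length_eq (ω : List (Fin 3)) (h : ω.Chain' (· ≠ ·)) :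
    cs.length (cs.wordProd ω) = ω.length := by
  refine le_antisymm (cs.length_wordProd_le ω) ?_
  obtain ⟨σ, hσ, hw⟩ := cs.exists_reduced_word' (cs.wordProd ω)
  have h1 : ((φ cs (cs.wordProd σ)) emp).1.length ≤ σ.length := φ_len_le cs σ
  rw [← hw] at h1
  rw [φ_reduced cs ω h] at h1
  rw [hw, hσ]
  exact h1

/-- The word for `(s₀s₁)^k s₂`. -/
def wA : ℕ → List (Fin 3)
  | 0 => [2]
  | k + 1 => 0 :: 1 :: wA k

/-- The word for `(s₁s₀)^k s₂`. -/
def wB : ℕ → List (Fin 3)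
  | 0 => [2]
  | k + 1 => 1 :: 0 :: wB k

lemma wA_head (k : ℕ) : (wA k).head? = some 2 ∨ (wA k).head? = some 0 := by
  cases k <;> simp [wA]

lemma wB_head (k : ℕ) : (wB k).head? = some 2 ∨ (wB k).head? = some 1 := by
  cases k <;> simp [wB]

lemma wA_chain (k : ℕ) : (wA k).Chain' (· ≠ ·) := by
  induction k with
  | zero => simp [wA, List.Chain']
  | succ k ih =>
    rw [wA, List.Chain', List.isChain_cons]
    constructor
    · intro y hy; simp at hy; subst hy; decide
    · rw [List.isChain_cons]
      refine ⟨fun y hy => ?_, ih⟩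
      rcases wA_head k with h | h <;> rw [h] at hy <;> simp at hy <;> subst hy <;> decide

lemma wB_chain (k : ℕ) : (wB k).Chain' (· ≠ ·) := by
  induction k with
  | zero => simp [wB, List.Chain']
  | succ k ih =>
    rw [wB, List.Chain', List.isChain_cons]
    constructor
    · intro y hy; simp at hy; subst hy; decide
    · rw [List.isChain_cons]
      refine ⟨fun y hy => ?_, ih⟩
      rcases wB_head k with h | h <;> rw [h] at hy <;> simp at hy <;> subst hy <;> decide

lemma wA_length (k : ℕ) : (wA k).length = 2 * k + 1 := by
  induction k with
  | zero => rfl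
  | succ k ih => simp [wA, ih]; omega

lemma wB_length (k : ℕ) : (wB k).length = 2 * k + 1 := by
  induction k with
  | zero => rfl
  | succ k ih => simp [wB, ih]; omega

lemma wA_prod (k : ℕ) :
    cs.wordProd (wA k) = (cs.simple 0 * cs.simple 1) ^ k * cs.simple 2 := by
  induction k with
  | zero => simp [wA, cs.wordProd_cons]
  | succ k ih =>
    rw [wA, cs.wordProd_cons, cs.wordProd_cons, ih, pow_succ']
    group

lemma wB_prod (k : ℕ) :
    cs.wordProd (wB k) = (cs.simple 1 * cs.simple 0) ^ k * cs.simple 2 := by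
  induction k with
  | zero => simp [wB, cs.wordProd_cons]
  | succ k ih =>
    rw [wB, cs.wordProd_cons, cs.wordProd_cons, ih, pow_succ']
    group

lemma length_gku (k : ℕ) :
    cs.length ((cs.simple 0 * cs.simple 1) ^ k * cs.simple 2) = 2 * k + 1 := by
  rw [← wA_prod, length_eq cs _ (wA_chain k), wA_length]

lemma chain_two_cons_wA {m : ℕ} (hm : 0 < m) : ((2 : Fin 3) :: wA m).Chain' (· ≠ ·) := by
  rw [List.Chain', List.isChain_cons]
  refine ⟨fun y hy => ?_, wA_chain m⟩
  obtain ⟨m', rfl⟩ := Nat.exists_eq_add_of_lt hm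
  simp [wA] at hy; subst hy; decide

lemma chain_two_cons_wB {m : ℕ} (hm : 0 < m) : ((2 : Fin 3) :: wB m).Chain' (· ≠ ·) := by
  rw [List.Chain', List.isChain_cons]
  refine ⟨fun y hy => ?_, wB_chain m⟩
  obtain ⟨m', rfl⟩ := Nat.exists_eq_add_of_lt hm
  simp [wB] at hy; subst hy; decide

lemma length_ugmu {m : ℕ} (hm : 0 < m) :
    cs.length (cs.simple 2 * ((cs.simple 0 * cs.simple 1) ^ m * cs.simple 2)) = 2 * m + 2 := by
  have : cs.simple 2 * ((cs.simple 0 * cs.simple 1) ^ m * cs.simple 2)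
      = cs.wordProd ((2 : Fin 3) :: wA m) := by
    rw [cs.wordProd_cons, wA_prod]
  rw [this, length_eq cs _ (chain_two_cons_wA hm)]
  simp [wA_length]

lemma length_ugmu' {m : ℕ} (hm : 0 < m) :
    cs.length (cs.simple 2 * ((cs.simple 1 * cs.simple 0) ^ m * cs.simple 2)) = 2 * m + 2 := by
  have : cs.simple 2 * ((cs.simple 1 * cs.simple 0) ^ m * cs.simple 2)
      = cs.wordProd ((2 : Fin 3) :: wB m) := by
    rw [cs.wordProd_cons, wB_prod]
  rw [this, length_eq cs _ (chain_two_cons_wB hm)]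
  simp [wB_length]

end UnivAux

/-- In the universal Coxeter group of rank 3 with generators `s, t, u` (all
pairwise products of infinite order), the set `{(st)ᵏu : k ∈ ℕ}` is an
infinite antichain in the right weak order. -/
theorem universal_rank3_infinite_antichain {W : Type*} [Group W]
    (cs : CoxeterSystem univMatrix3 W) :
    (Set.range fun k : ℕ =>
        (cs.simple 0 * cs.simple 1) ^ k * cs.simple 2).Infinite ∧
      IsAntichain (weakLE cs)
        (Set.range fun k : ℕ =>
          (cs.simple 0 * cs.simple 1) ^ k * cs.simple 2) := by
  open UnivAux in
  have hinj : Function.Injective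
      (fun k : ℕ => (cs.simple 0 * cs.simple 1) ^ k * cs.simple 2) := by
    intro j k h
    have := congrArg cs.length h
    rw [length_gku cs, length_gku cs] at this
    omega
  refine ⟨Set.infinite_range_of_injective hinj, ?_⟩
  rintro v ⟨j, rfl⟩ w ⟨k, rfl⟩ hne
  simp only at hne ⊢
  have hjk : j ≠ k := fun h => hne (by rw [h])
  set g := cs.simple 0 * cs.simple 1 with hg
  set u := cs.simple 2 with hu
  have hu2 : u⁻¹ = u := cs.inv_simple 2
  intro hle
  unfold weakLE at hle
  rw [length_gku cs, length_gku cs] at hle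
  rcases lt_or_gt_of_ne hjk with h | h
  · obtain ⟨m, rfl⟩ := Nat.exists_eq_add_of_lt h
    have hm : 0 < m + 1 := Nat.succ_pos m
    have hv : (g ^ j * u)⁻¹ * (g ^ (j + m + 1) * u) = u * (g ^ (m + 1) * u) := by
      rw [mul_inv_rev, hu2]
      group
    rw [hv, length_ugmu cs hm] at hle
    omega
  · obtain ⟨m, rfl⟩ := Nat.exists_eq_add_of_lt h
    have hm : 0 < m + 1 := Nat.succ_pos m
    have hginv : g⁻¹ = cs.simple 1 * cs.simple 0 := by
      rw [hg, mul_inv_rev, cs.inv_simple, cs.inv_simple]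
    have hv : (g ^ (k + m + 1) * u)⁻¹ * (g ^ k * u)
        = u * ((cs.simple 1 * cs.simple 0) ^ (m + 1) * u) := by
      rw [← hginv, mul_inv_rev, hu2]
      group
    rw [hv, length_ugmu' cs hm] at hle
    omega
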